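/- Sufficient condition for unit-disk eigenvalues in PGDN: let T = α(I - β k k̃^T) with α ∈ [0,1], β ∈ [0,1], ‖k‖₂ = 1, k̃ = B k where B = diag(b_1,...,b_d) with b_i ∈ [1/x, x] for some x > 1. If β x ≤ 2 then every eigenvalue λ of T satisfies |λ| ≤ 1. -/
import Mathlib


open Matrix

/-- Sufficient condition for unit-disk eigenvalues in the PGDN transition. -/
theorem stmt_7 {d : ℕ} (hd : 1 ≤ d) (α β x : ℝ)
    (hα0 : 0 ≤ α) (hα1 : α ≤ 1) (hβ0 : 0 ≤ β) (hβ1 : β ≤ 1) (hx : 1 < x)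
    (k : Fin d → ℝ) (hk : k ⬝ᵥ k = 1)
    (b : Fin d → ℝ) (hb : ∀ i, 1 / x ≤ b i ∧ b i ≤ x)
    (ktilde : Fin d → ℝ) (hktilde : ktilde = (Matrix.diagonal b).mulVec k)
    (hβx : β * x ≤ 2) :
    ∀ μ : ℝ,
      Module.End.HasEigenvalue
        (Matrix.toLin'
          (α • ((1 : Matrix (Fin d) (Fin d) ℝ) - β • vecMulVec k ktilde))) μ →
      |μ| ≤ 1 := by
  intro μ hμ
  obtain ⟨v, hv, hvne⟩ := hμ.exists_hasEigenvector
  have heq : ∀ i, μ * v i = α * v i - α * β * (ktilde ⬝ᵥ v) * k i := by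
    have h := hv
    rw [Module.End.mem_eigenspace_iff] at h
    intro i
    have h2 := congrFun h i
    simp only [Matrix.toLin'_apply, Matrix.mulVec, dotProduct,
      Matrix.smul_apply, Matrix.sub_apply, Matrix.one_apply, Matrix.vecMulVec_apply,
      Pi.smul_apply, smul_eq_mul] at h2
    rw [← h2]
    simp only [dotProduct]
    rw [Finset.sum_congr rfl (fun j _ => by split_ifs <;> ring :
      ∀ j ∈ Finset.univ, α * ((if i = j then 1 else 0) - β * (k i * ktilde j)) * v j
        = (if i = j then α * v j else 0) - α * β * (ktilde j * v j) * k i)]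
    rw [Finset.sum_sub_distrib, Finset.sum_ite_eq, ← Finset.sum_mul, ← Finset.mul_sum]
    simp [mul_comm, mul_assoc, mul_left_comm]
  set t : ℝ := ktilde ⬝ᵥ v with ht
  by_cases h0 : t = 0
  · -- μ = α
    have : ∃ i, v i ≠ 0 := by
      by_contra hc
      push_neg at hc
      exact hvne (funext hc)
    obtain ⟨i, hi⟩ := this
    have := heq i
    rw [h0] at this
    have hμα : μ = α := by
      have : (μ - α) * v i = 0 := by linarith [this]
      rcases mul_eq_zero.mp this with h | h
      · linarith
      · exact absurd h hi
    rw [hμα, abs_of_nonneg hα0]; exact hα1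
  · -- μ = α (1 - β c) with c = ktilde ⬝ᵥ k
    set c : ℝ := ktilde ⬝ᵥ k with hc
    have hts : t = ∑ i, ktilde i * v i := by simp [ht, dotProduct]
    have hcs : c = ∑ i, ktilde i * k i := by simp [hc, dotProduct]
    have hμc : μ * t = α * t - α * β * t * c := by
      calc μ * t = ∑ i, ktilde i * (μ * v i) := by
            rw [hts, Finset.mul_sum]; exact Finset.sum_congr rfl (fun i _ => by ring)
        _ = ∑ i, ktilde i * (α * v i - α * β * t * k i) :=
            Finset.sum_congr rfl (fun i _ => by rw [heq i])
        _ = α * (∑ i, ktilde i * v i) - α * β * t * (∑ i, ktilde i * k i) := by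
            rw [Finset.mul_sum, Finset.mul_sum, ← Finset.sum_sub_distrib]
            exact Finset.sum_congr rfl (fun i _ => by ring)
        _ = α * t - α * β * t * c := by rw [← hts, ← hcs]
    have hμval : μ = α * (1 - β * c) := by
      have h : (μ - α * (1 - β * c)) * t = 0 := by ring_nf; ring_nf at hμc; linarith
      rcases mul_eq_zero.mp h with h | h
      · linarith
      · exact absurd h h0
    -- bounds on c = ∑ b i * k i ^ 2
    have hceq : c = ∑ i, b i * (k i * k i) := by
      rw [hc, hktilde]
      simp only [dotProduct, Matrix.mulVec_diagonal]
      exact Finset.sum_congr rfl (fun i _ => by ring)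
    have hxpos : (0:ℝ) < x := lt_trans one_pos hx
    have hcub : c ≤ x := by
      rw [hceq]
      calc ∑ i, b i * (k i * k i) ≤ ∑ i, x * (k i * k i) :=
            Finset.sum_le_sum (fun i _ => by
              have := (hb i).2
              nlinarith [mul_self_nonneg (k i)])
        _ = x := by rw [← Finset.mul_sum]; simp [dotProduct] at hk; rw [hk, mul_one]
    have hclb : 1 / x ≤ c := by
      rw [hceq]
      calc (1:ℝ)/x = ∑ i, (1/x) * (k i * k i) := by
            rw [← Finset.mul_sum]; simp [dotProduct] at hk; rw [hk, mul_one]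
        _ ≤ ∑ i, b i * (k i * k i) :=
            Finset.sum_le_sum (fun i _ => by
              have := (hb i).1
              nlinarith [mul_self_nonneg (k i)])
    have hcpos : 0 < c := lt_of_lt_of_le (by positivity) hclb
    rw [hμval, abs_le]
    have hβc : β * c ≤ β * x := mul_le_mul_of_nonneg_left hcub hβ0
    have hβc0 : 0 ≤ β * c := mul_nonneg hβ0 hcpos.le
    constructor
    · nlinarith
    · nlinarith
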